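/- arXiv:1503.03314 — 2 statements merged into one kernel-verified Lean document; each statement's English description precedes it below -/
import Mathlib

section
/- For every δ > 0, every even integer k ≥ 2, and every z ≤ δ, the relaxing functions satisfy β_k(z;δ) ≤ β_{k+2}(z;δ) ≤ β_e(z;δ), where β_e(z;δ) = exp(1 − z/δ) − 1 − ln(δ). -/
/-- Polynomial relaxing function β_k(z;δ). -/
noncomputable def betaK (k : ℕ) (δ z : ℝ) : ℝ :=
  ((k - 1 : ℝ) / k) * (((z - k * δ) / ((k - 1 : ℝ) * δ)) ^ k - 1) - Real.log δ

/-- Exponential relaxing function β_e(z;δ). -/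
noncomputable def betaE (δ z : ℝ) : ℝ := Real.exp (1 - z / δ) - 1 - Real.log δ

namespace BetaAux

/-- Taylor-style coefficient of `t^(j+1)` in `β_k`. -/
noncomputable def b (k j : ℕ) : ℝ := (k.choose (j + 1) : ℝ) / (k * ((k : ℝ) - 1) ^ j)

lemma df_key (k : ℕ) (hk : 2 ≤ k) :
    ∀ j : ℕ, (k - 1).descFactorial j * (k + 1) ^ j ≤ (k + 1).descFactorial j * (k - 1) ^ j := by
  intro j
  induction j with
  | zero => simp
  | succ j ih =>
    rw [Nat.descFactorial_succ, Nat.descFactorial_succ, pow_succ, pow_succ]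
    have h1 : (k - 1 - j) * (k + 1) ≤ (k + 1 - j) * (k - 1) := by
      rcases le_or_gt (k - 1) j with h | h
      · have : k - 1 - j = 0 := by omega
        simp [this]
      · obtain ⟨a, ha⟩ : ∃ a, k - 1 - j = a + 1 := ⟨k - 2 - j, by omega⟩
        have h2 : k + 1 - j = a + 3 := by omega
        have h3 : k - 1 = a + 1 + j := by omega
        have h4 : k + 1 = a + 3 + j := by omega
        rw [ha, h2, h3, h4]
        nlinarith [j.zero_le]
    calc (k - 1 - j) * (k - 1).descFactorial j * ((k + 1) ^ j * (k + 1))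
        = ((k - 1 - j) * (k + 1)) * ((k - 1).descFactorial j * (k + 1) ^ j) := by ring
      _ ≤ ((k + 1 - j) * (k - 1)) * ((k + 1).descFactorial j * (k - 1) ^ j) :=
          Nat.mul_le_mul h1 ih
      _ = (k + 1 - j) * (k + 1).descFactorial j * ((k - 1) ^ j * (k - 1)) := by ring

lemma df_succ (k : ℕ) (hk : 1 ≤ k) (j : ℕ) :
    k.descFactorial (j + 1) = k * (k - 1).descFactorial j := by
  obtain ⟨m, rfl⟩ : ∃ m, k = m + 1 := ⟨k - 1, by omega⟩
  simpa using Nat.succ_descFactorial_succ m j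

lemma b_nonneg (k j : ℕ) (hk : 2 ≤ k) : 0 ≤ b k j := by
  have h1 : (0:ℝ) ≤ (k:ℝ) - 1 := by
    have : (2:ℝ) ≤ (k:ℝ) := by exact_mod_cast hk
    linarith
  exact div_nonneg (by positivity) (by positivity)

lemma denom_pos (k j : ℕ) (hk : 2 ≤ k) : 0 < (k : ℝ) * ((k : ℝ) - 1) ^ j := by
  have h1 : (1:ℝ) ≤ (k:ℝ) - 1 := by
    have : (2:ℝ) ≤ (k:ℝ) := by exact_mod_cast hk
    linarith
  positivity

lemma cast_denom (k j : ℕ) (hk : 2 ≤ k) :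
    ((k * (k - 1) ^ j : ℕ) : ℝ) = (k : ℝ) * ((k : ℝ) - 1) ^ j := by
  have h1 : 1 ≤ k := by omega
  push_cast [Nat.cast_sub h1]
  ring

lemma b_le (k j : ℕ) (hk : 2 ≤ k) : b k j ≤ 1 / (j + 1).factorial := by
  have hnat : (j + 1).factorial * k.choose (j + 1) ≤ k * (k - 1) ^ j := by
    calc (j + 1).factorial * k.choose (j + 1) = k.descFactorial (j + 1) :=
          (Nat.descFactorial_eq_factorial_mul_choose _ _).symm
      _ = k * (k - 1).descFactorial j := df_succ k (by omega) j
      _ ≤ k * (k - 1) ^ j := Nat.mul_le_mul_left _ (Nat.descFactorial_le_pow _ _)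
  rw [b, div_le_div_iff₀ (denom_pos k j hk) (by positivity)]
  have := cast_denom k j hk
  calc (k.choose (j + 1) : ℝ) * (j + 1).factorial
      = (((j + 1).factorial * k.choose (j + 1) : ℕ) : ℝ) := by push_cast; ring
    _ ≤ ((k * (k - 1) ^ j : ℕ) : ℝ) := by exact_mod_cast hnat
    _ = 1 * ((k : ℝ) * ((k : ℝ) - 1) ^ j) := by rw [this]; ring

lemma b_mono (k j : ℕ) (hk : 2 ≤ k) : b k j ≤ b (k + 2) j := by
  have hnat : k.choose (j + 1) * ((k + 2) * (k + 1) ^ j)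
      ≤ (k + 2).choose (j + 1) * (k * (k - 1) ^ j) := by
    have hfac : (0:ℕ) < (j + 1).factorial := Nat.factorial_pos _
    apply Nat.le_of_mul_le_mul_left _ hfac
    calc (j + 1).factorial * (k.choose (j + 1) * ((k + 2) * (k + 1) ^ j))
        = (k * (k + 2)) * ((k - 1).descFactorial j * (k + 1) ^ j) := by
          rw [show (j + 1).factorial * (k.choose (j + 1) * ((k + 2) * (k + 1) ^ j))
              = ((j + 1).factorial * k.choose (j + 1)) * ((k + 2) * (k + 1) ^ j) by ring,
            ← Nat.descFactorial_eq_factorial_mul_choose, df_succ k (by omega) j]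
          ring
      _ ≤ (k * (k + 2)) * ((k + 1).descFactorial j * (k - 1) ^ j) :=
          Nat.mul_le_mul_left _ (df_key k hk j)
      _ = (j + 1).factorial * ((k + 2).choose (j + 1) * (k * (k - 1) ^ j)) := by
          rw [show (j + 1).factorial * ((k + 2).choose (j + 1) * (k * (k - 1) ^ j))
              = ((j + 1).factorial * (k + 2).choose (j + 1)) * (k * (k - 1) ^ j) by ring,
            ← Nat.descFactorial_eq_factorial_mul_choose,
            df_succ (k + 2) (by omega) j]
          have : k + 2 - 1 = k + 1 := by omega
          rw [this]; ring
  rw [b, b, div_le_div_iff₀ (denom_pos k j hk) (denom_pos (k + 2) j (by omega))]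
  have h2 : ((k:ℝ) + 2) * ((k:ℝ) + 2 - 1) ^ j = (((k + 2) * (k + 1) ^ j : ℕ) : ℝ) := by
    push_cast; ring_nf
  calc (k.choose (j + 1) : ℝ) * (((k + 2):ℕ) * (((k + 2):ℕ) - 1) ^ j)
      = (k.choose (j + 1) : ℝ) * (((k + 2) * (k + 1) ^ j : ℕ) : ℝ) := by
        push_cast; ring_nf
    _ = ((k.choose (j + 1) * ((k + 2) * (k + 1) ^ j) : ℕ) : ℝ) := by push_cast; ring
    _ ≤ (((k + 2).choose (j + 1) * (k * (k - 1) ^ j) : ℕ) : ℝ) := by exact_mod_cast hnat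
    _ = ((k + 2).choose (j + 1) : ℝ) * ((k : ℝ) * ((k:ℝ) - 1) ^ j) := by
        rw [Nat.cast_mul, cast_denom k j hk]

lemma expand (k : ℕ) (hk : 2 ≤ k) (t : ℝ) :
    ((k : ℝ) - 1) / k * ((1 + t / ((k : ℝ) - 1)) ^ k - 1)
      = ∑ j ∈ Finset.range k, b k j * t ^ (j + 1) := by
  have hk2 : (2:ℝ) ≤ (k:ℝ) := by exact_mod_cast hk
  have hk1 : ((k:ℝ) - 1) ≠ 0 := by linarith
  have hk0 : (k:ℝ) ≠ 0 := by linarith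
  set u : ℝ := t / ((k:ℝ) - 1) with hu
  have hpow : (1 + u) ^ k = ∑ m ∈ Finset.range (k + 1), u ^ m * (k.choose m : ℝ) := by
    rw [add_comm, add_pow]
    simp
  have hshift : ∑ m ∈ Finset.range (k + 1), u ^ m * (k.choose m : ℝ)
      = (∑ j ∈ Finset.range k, u ^ (j + 1) * (k.choose (j + 1) : ℝ)) + 1 := by
    rw [Finset.sum_range_succ' (fun m => u ^ m * (k.choose m : ℝ)) k]
    simp
  rw [hpow, hshift, add_sub_cancel_right, Finset.mul_sum]
  apply Finset.sum_congr rfl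
  intro j _
  rw [b, hu, div_pow]
  field_simp
  ring

end BetaAux

theorem stmt2 (k : ℕ) (hk : 2 ≤ k) (hke : Even k) (δ z : ℝ) (hδ : 0 < δ) (hz : z ≤ δ) :
    betaK k δ z ≤ betaK (k + 2) δ z ∧ betaK (k + 2) δ z ≤ betaE δ z := by
  open BetaAux in
  set t : ℝ := 1 - z / δ with htdef
  have ht : 0 ≤ t := by
    have : z / δ ≤ 1 := (div_le_one hδ).2 hz
    simp [htdef]; linarith
  -- rewrite betaK as a sum
  have key : ∀ m : ℕ, 2 ≤ m → Even m →
      betaK m δ z = (∑ j ∈ Finset.range m, b m j * t ^ (j + 1)) - Real.log δ := by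
    intro m hm hme
    have hm2 : (2:ℝ) ≤ (m:ℝ) := by exact_mod_cast hm
    have hm1 : ((m:ℝ) - 1) ≠ 0 := by linarith
    have hm0 : (m:ℝ) ≠ 0 := by linarith
    have hbase : (z - m * δ) / (((m:ℝ) - 1) * δ) = -(1 + t / ((m:ℝ) - 1)) := by
      field_simp [htdef]
      have hzd : δ * (z / δ) = z := by field_simp [hδ.ne']
      rw [htdef]; linear_combination (-1:ℝ) * hzd
    rw [betaK, hbase, hme.neg_pow, expand m hm t]
  have hk2e : Even (k + 2) := by
    rcases hke with ⟨r, hr⟩; exact ⟨r + 1, by omega⟩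
  rw [key k hk hke, key (k + 2) (by omega) hk2e]
  constructor
  · -- monotonicity
    apply sub_le_sub_right
    calc ∑ j ∈ Finset.range k, b k j * t ^ (j + 1)
        ≤ ∑ j ∈ Finset.range k, b (k + 2) j * t ^ (j + 1) := by
          apply Finset.sum_le_sum
          intro j _
          exact mul_le_mul_of_nonneg_right (b_mono k j hk) (pow_nonneg ht _)
      _ ≤ ∑ j ∈ Finset.range (k + 2), b (k + 2) j * t ^ (j + 1) := by
          apply Finset.sum_le_sum_of_subset_of_nonneg
          · exact Finset.range_subset_range.2 (by omega)
          · intro j _ _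
            exact mul_nonneg (b_nonneg (k + 2) j (by omega)) (pow_nonneg ht _)
  · -- bound by exponential
    have hsum : ∑ j ∈ Finset.range (k + 2), b (k + 2) j * t ^ (j + 1)
        ≤ Real.exp t - 1 := by
      calc ∑ j ∈ Finset.range (k + 2), b (k + 2) j * t ^ (j + 1)
          ≤ ∑ j ∈ Finset.range (k + 2), t ^ (j + 1) / (j + 1).factorial := by
            apply Finset.sum_le_sum
            intro j _
            calc b (k + 2) j * t ^ (j + 1)
                ≤ (1 / (j + 1).factorial) * t ^ (j + 1) :=
                  mul_le_mul_of_nonneg_right (b_le (k + 2) j (by omega)) (pow_nonneg ht _)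
              _ = t ^ (j + 1) / (j + 1).factorial := by ring
        _ = (∑ i ∈ Finset.range (k + 3), t ^ i / i.factorial) - 1 := by
            rw [Finset.sum_range_succ' (fun i => t ^ i / (i.factorial : ℝ)) (k + 2)]
            simp
        _ ≤ Real.exp t - 1 := by
            have := Real.sum_le_exp_of_nonneg ht (k + 3)
            linarith
    rw [betaE]
    linarith
end

section
/- Consider the relaxed weight-recentered logarithmic barrier for state constraints, B̂_x(x) = ∑_{i=1}^{q_x} (1+w_x^i)·(b(−C_x^i x + d_x^i) + ln(d_x^i)), where b(z) = −ln(z) for z > δ and b(z) = β_2(z;δ) for z ≤ δ with quadratic relaxing function β_2. Then the Hessian satisfies ∇²B̂_x(x) ⪯ (1/δ²)·C_xᵀ diag(1 + w_x) C_x for all x ∈ ℝ^n, and consequently B̂_x(x) ≤ xᵀ M_x x for all x, where M_x = (1/(2δ²))·C_xᵀ diag(1 + w_x) C_x, provided B̂_x(0) = 0 and ∇B̂_x(0) = 0. -/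
open Matrix

/-- Quadratic relaxing function β_2(z;δ). -/
noncomputable def beta2 (δ z : ℝ) : ℝ :=
  (1 / 2) * (((z - 2 * δ) / δ) ^ 2 - 1) - Real.log δ

/-- Relaxed logarithmic barrier for ℝ₊ with quadratic relaxing function. -/
noncomputable def bRel (δ z : ℝ) : ℝ := if δ < z then -Real.log z else beta2 δ z

noncomputable def dbRel (δ z : ℝ) : ℝ := if δ < z then -z⁻¹ else (z - 2*δ)/δ^2
noncomputable def db2Rel (δ z : ℝ) : ℝ := if δ < z then (z^2)⁻¹ else (δ^2)⁻¹

lemma hasDerivAt_beta2 {δ : ℝ} (hδ : δ ≠ 0) (z : ℝ) :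
    HasDerivAt (beta2 δ) ((z - 2*δ)/δ^2) z := by
  have h1 : HasDerivAt (fun z : ℝ => (z - 2*δ)/δ) (1/δ) z := by
    simpa using (((hasDerivAt_id z).sub_const (2*δ)).div_const δ)
  have h2 := (((h1.pow 2).sub_const 1).const_mul (1/2)).sub_const (Real.log δ)
  unfold beta2
  refine h2.congr_deriv ?_
  simp only [pow_one, Nat.cast_ofNat]
  field_simp
  simp only [Nat.reduceSub, pow_one]
  exact mul_div_cancel₀ _ hδ


lemma beta2_self {δ : ℝ} (hδ : 0 < δ) : beta2 δ δ = -Real.log δ := by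
  have h : ((δ - 2 * δ) / δ) ^ 2 = 1 := by
    rw [div_pow]
    rw [show (δ - 2*δ)^2 = δ^2 by ring]
    field_simp
  rw [beta2, h]
  ring

lemma bRel_of_ge {δ a : ℝ} (hδ : 0 < δ) (h : δ ≤ a) : bRel δ a = -Real.log a := by
  rcases lt_or_eq_of_le h with h' | h'
  · simp [bRel, h']
  · simp [bRel, ← h', beta2_self hδ]

lemma dbRel_self {δ : ℝ} (hδ : 0 < δ) : dbRel δ δ = -δ⁻¹ := by
  have hval : (δ - 2*δ)/δ^2 = -δ⁻¹ := by field_simp; ring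
  simp [dbRel, hval]

lemma dbRel_of_ge {δ a : ℝ} (hδ : 0 < δ) (h : δ ≤ a) : dbRel δ a = -a⁻¹ := by
  rcases lt_or_eq_of_le h with h' | h'
  · simp [dbRel, h']
  · rw [← h', dbRel_self hδ]

lemma hasDerivAt_bRel {δ : ℝ} (hδ : 0 < δ) (z : ℝ) :
    HasDerivAt (bRel δ) (dbRel δ z) z := by
  rcases lt_trichotomy z δ with hz | hz | hz
  · have hev : bRel δ =ᶠ[nhds z] beta2 δ := by
      filter_upwards [Iio_mem_nhds hz] with y hy
      have h' : ¬ δ < y := not_lt.mpr (le_of_lt (Set.mem_Iio.mp hy))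
      simp [bRel, h']
    have h2 := (hasDerivAt_beta2 hδ.ne' z).congr_of_eventuallyEq hev
    have h' : ¬ δ < z := not_lt.mpr (le_of_lt hz)
    simpa [dbRel, h'] using h2
  · subst hz
    have hIic : HasDerivWithinAt (bRel z) ((z - 2*z)/z^2) (Set.Iic z) z := by
      refine ((hasDerivAt_beta2 hδ.ne' z).hasDerivWithinAt (s := Set.Iic z)).congr ?_ ?_
      · intro y hy
        have h' : ¬ z < y := not_lt.mpr (Set.mem_Iic.mp hy)
        simp [bRel, h']
      · simp [bRel]
    have hIci : HasDerivWithinAt (bRel z) ((z - 2*z)/z^2) (Set.Ici z) z := by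
      have hval : (z - 2*z)/z^2 = -z⁻¹ := by field_simp; ring
      rw [hval]
      have h1 : HasDerivAt (fun y : ℝ => -Real.log y) (-z⁻¹) z :=
        (Real.hasDerivAt_log hδ.ne').neg
      exact (h1.hasDerivWithinAt (s := Set.Ici z)).congr
        (fun y hy => bRel_of_ge hδ (Set.mem_Ici.mp hy)) (bRel_of_ge hδ le_rfl)
    have hu := hIic.union hIci
    rw [Set.Iic_union_Ici] at hu
    have h2 := hu.hasDerivAt (by simp)
    simpa [dbRel] using h2
  · have hev : bRel δ =ᶠ[nhds z] (fun y => -Real.log y) := by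
      filter_upwards [Ioi_mem_nhds hz] with y hy
      exact bRel_of_ge hδ (le_of_lt (Set.mem_Ioi.mp hy))
    have h1 : HasDerivAt (fun y : ℝ => -Real.log y) (-z⁻¹) z :=
      (Real.hasDerivAt_log (hδ.trans hz).ne').neg
    have h2 := h1.congr_of_eventuallyEq hev
    simpa [dbRel, hz] using h2

lemma hasDerivAt_dbRel {δ : ℝ} (hδ : 0 < δ) (z : ℝ) :
    HasDerivAt (dbRel δ) (db2Rel δ z) z := by
  have hlin : ∀ y : ℝ, HasDerivAt (fun y : ℝ => (y - 2*δ)/δ^2) ((δ^2)⁻¹) y := by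
    intro y
    simpa [one_div] using (((hasDerivAt_id y).sub_const (2*δ)).div_const (δ^2))
  have hinv : ∀ y : ℝ, y ≠ 0 → HasDerivAt (fun y : ℝ => -y⁻¹) ((y^2)⁻¹) y := by
    intro y hy
    simpa using (hasDerivAt_inv hy).fun_neg
  rcases lt_trichotomy z δ with hz | hz | hz
  · have hev : dbRel δ =ᶠ[nhds z] (fun y => (y - 2*δ)/δ^2) := by
      filter_upwards [Iio_mem_nhds hz] with y hy
      have h' : ¬ δ < y := not_lt.mpr (le_of_lt (Set.mem_Iio.mp hy))
      simp [dbRel, h']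
    have h2 := (hlin z).congr_of_eventuallyEq hev
    have h' : ¬ δ < z := not_lt.mpr (le_of_lt hz)
    simpa [db2Rel, h'] using h2
  · subst hz
    have hIic : HasDerivWithinAt (dbRel z) ((z^2)⁻¹) (Set.Iic z) z := by
      refine ((hlin z).hasDerivWithinAt (s := Set.Iic z)).congr ?_ ?_
      · intro y hy
        have h' : ¬ z < y := not_lt.mpr (Set.mem_Iic.mp hy)
        simp [dbRel, h']
      · simp [dbRel]
    have hIci : HasDerivWithinAt (dbRel z) ((z^2)⁻¹) (Set.Ici z) z := by
      exact ((hinv z hδ.ne').hasDerivWithinAt (s := Set.Ici z)).congr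
        (fun y hy => dbRel_of_ge hδ (Set.mem_Ici.mp hy)) (dbRel_of_ge hδ le_rfl)
    have hu := hIic.union hIci
    rw [Set.Iic_union_Ici] at hu
    have h2 := hu.hasDerivAt (by simp)
    simpa [db2Rel] using h2
  · have hev : dbRel δ =ᶠ[nhds z] (fun y => -y⁻¹) := by
      filter_upwards [Ioi_mem_nhds hz] with y hy
      exact dbRel_of_ge hδ (le_of_lt (Set.mem_Ioi.mp hy))
    have h2 := (hinv z (hδ.trans hz).ne').congr_of_eventuallyEq hev
    simpa [db2Rel, hz] using h2

lemma db2Rel_nonneg {δ : ℝ} (hδ : 0 < δ) (z : ℝ) : 0 ≤ db2Rel δ z := by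
  unfold db2Rel
  split
  · have : δ < z := by assumption
    positivity
  · positivity

lemma db2Rel_le {δ : ℝ} (hδ : 0 < δ) (z : ℝ) : db2Rel δ z ≤ (δ^2)⁻¹ := by
  unfold db2Rel
  split
  · have hz : δ < z := by assumption
    have : δ^2 ≤ z^2 := by nlinarith
    exact inv_anti₀ (by positivity) this
  · exact le_rfl

lemma oneD {δ a : ℝ} (hδ : 0 < δ) (ha : δ ≤ a) (s : ℝ) :
    bRel δ (a - s) + Real.log a ≤ s/a + s^2/(2*δ^2) := by
  have ha0 : 0 < a := lt_of_lt_of_le hδ ha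
  set ψ : ℝ → ℝ := fun t => t/a + t^2/(2*δ^2) - (bRel δ (a - t) + Real.log a) with hψdef
  have hψ : ∀ t : ℝ, HasDerivAt ψ (1/a + t/δ^2 + dbRel δ (a - t)) t := by
    intro t
    have h1 : HasDerivAt (fun t : ℝ => t/a) (1/a) t := by
      simpa using ((hasDerivAt_id t).div_const a)
    have h2 : HasDerivAt (fun t : ℝ => t^2/(2*δ^2)) (t/δ^2) t := by
      have := (hasDerivAt_pow 2 t).div_const (2*δ^2)
      refine this.congr_deriv ?_
      push_cast
      rw [pow_one]
      field_simp
    have h3 : HasDerivAt (fun t : ℝ => a - t) (-1) t := by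
      simpa using ((hasDerivAt_const t a).fun_sub (hasDerivAt_id t))
    have h4 : HasDerivAt (fun t : ℝ => bRel δ (a - t)) (dbRel δ (a - t) * (-1)) t :=
      (hasDerivAt_bRel hδ (a - t)).comp t h3
    have h5 := ((h1.fun_add h2).fun_sub (h4.add_const (Real.log a)))
    refine h5.congr_deriv ?_
    ring
  have hsign_pos : ∀ t : ℝ, 0 ≤ t → 0 ≤ 1/a + t/δ^2 + dbRel δ (a - t) := by
    intro t ht
    unfold dbRel
    split
    · have h : δ < a - t := by assumption
      have h1 : 0 < a - t := hδ.trans h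
      have e : 1/a + t/δ^2 + -(a - t)⁻¹ = t*(a*(a-t) - δ^2)/(a*δ^2*(a-t)) := by
        field_simp
        ring
      rw [e]
      apply div_nonneg
      · apply mul_nonneg ht
        nlinarith
      · positivity
    · have e : 1/a + t/δ^2 + (a - t - 2*δ)/δ^2 = (a - δ)^2/(a*δ^2) := by
        field_simp
        ring
      rw [e]
      positivity
  have hsign_neg : ∀ t : ℝ, t ≤ 0 → 1/a + t/δ^2 + dbRel δ (a - t) ≤ 0 := by
    intro t ht
    unfold dbRel
    split
    · have h : δ < a - t := by assumption
      have h1 : 0 < a - t := hδ.trans h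
      have e : 1/a + t/δ^2 + -(a - t)⁻¹ = t*(a*(a-t) - δ^2)/(a*δ^2*(a-t)) := by
        field_simp
        ring
      rw [e]
      apply div_nonpos_of_nonpos_of_nonneg
      · apply mul_nonpos_of_nonpos_of_nonneg ht
        nlinarith
      · positivity
    · have h : ¬ δ < a - t := by assumption
      have ha' : a = δ := le_antisymm (by linarith [not_lt.mp h]) ha
      have ht0 : t = 0 := by
        have := not_lt.mp h
        linarith
      subst ha'
      subst ht0
      have e : 1/a + 0/a^2 + (a - 0 - 2*a)/a^2 = 0 := by
        field_simp
        ring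
      rw [e]
  have hψ0 : ψ 0 = 0 := by
    simp [hψdef, bRel_of_ge hδ ha]
  have key : ∀ s : ℝ, 0 ≤ ψ s := by
    intro s
    rcases le_or_gt 0 s with hs | hs
    · have hmono : MonotoneOn ψ (Set.Icc 0 s) := by
        apply monotoneOn_of_deriv_nonneg (convex_Icc 0 s)
        · exact fun t _ => ((hψ t).differentiableAt.continuousAt).continuousWithinAt
        · exact fun t _ => (hψ t).differentiableAt.differentiableWithinAt
        · intro t htm
          rw [interior_Icc] at htm
          rw [(hψ t).deriv]
          exact hsign_pos t (le_of_lt htm.1)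
      have := hmono (Set.left_mem_Icc.mpr hs) (Set.right_mem_Icc.mpr hs) hs
      rwa [hψ0] at this
    · have hanti : AntitoneOn ψ (Set.Icc s 0) := by
        apply antitoneOn_of_deriv_nonpos (convex_Icc s 0)
        · exact fun t _ => ((hψ t).differentiableAt.continuousAt).continuousWithinAt
        · exact fun t _ => (hψ t).differentiableAt.differentiableWithinAt
        · intro t htm
          rw [interior_Icc] at htm
          rw [(hψ t).deriv]
          exact hsign_neg t (le_of_lt htm.2)
      have := hanti (Set.left_mem_Icc.mpr (le_of_lt hs)) (Set.right_mem_Icc.mpr (le_of_lt hs)) (le_of_lt hs)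
      rwa [hψ0] at this
  have := key s
  simp only [hψdef] at this
  linarith

theorem stmt9 (n qx : ℕ) (Cx : Matrix (Fin qx) (Fin n) ℝ) (dx w : Fin qx → ℝ)
    (δ : ℝ) (hδ : 0 < δ) (hδd : ∀ i, δ ≤ dx i) (hd : ∀ i, 0 < dx i)
    (hw : ∀ i, 0 ≤ w i) :
    let Bx : (Fin n → ℝ) → ℝ := fun x =>
      ∑ i, (1 + w i) * (bRel δ (dx i - (Cx *ᵥ x) i) + Real.log (dx i))
    let D : Matrix (Fin qx) (Fin qx) ℝ := Matrix.diagonal fun i => 1 + w i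
    Bx 0 = 0 → fderiv ℝ Bx 0 = 0 →
      (∀ x v : Fin n → ℝ,
          (fderiv ℝ (fderiv ℝ Bx) x) v v ≤ (1 / δ ^ 2) * (v ⬝ᵥ ((Cxᵀ * D * Cx) *ᵥ v))) ∧
      (∀ x : Fin n → ℝ,
          Bx x ≤ x ⬝ᵥ ((((1 : ℝ) / (2 * δ ^ 2)) • (Cxᵀ * D * Cx)) *ᵥ x)) := by
  intro Bx D hB0 hgrad
  -- the linear maps
  set L : (Fin n → ℝ) →L[ℝ] (Fin qx → ℝ) :=
    LinearMap.toContinuousLinearMap (Matrix.mulVecLin Cx) with hL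
  set li : Fin qx → ((Fin n → ℝ) →L[ℝ] ℝ) :=
    fun i => (ContinuousLinearMap.proj i).comp L with hlidef
  have hli : ∀ i x, li i x = (Cx *ᵥ x) i := fun i x => rfl
  -- first derivative
  set F : (Fin n → ℝ) → ((Fin n → ℝ) →L[ℝ] ℝ) :=
    fun x => ∑ i, (-((1 + w i) * dbRel δ (dx i - li i x))) • li i with hFdef
  have hF : ∀ x, HasFDerivAt Bx (F x) x := by
    intro x
    have hterm : ∀ i : Fin qx, HasFDerivAt
        (fun y => (1 + w i) * (bRel δ (dx i - (Cx *ᵥ y) i) + Real.log (dx i)))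
        ((-((1 + w i) * dbRel δ (dx i - li i x))) • li i) x := by
      intro i
      have h3 : HasDerivAt (fun t : ℝ => dx i - t) (-1) (li i x) := by
        simpa using ((hasDerivAt_const (li i x) (dx i)).fun_sub (hasDerivAt_id (li i x)))
      have hg : HasDerivAt (fun t : ℝ => (1 + w i) * (bRel δ (dx i - t) + Real.log (dx i)))
          (-((1 + w i) * dbRel δ (dx i - li i x))) (li i x) := by
        have h4 := ((hasDerivAt_bRel hδ (dx i - li i x)).comp (li i x) h3).add_const
          (Real.log (dx i))
        have h5 := h4.const_mul (1 + w i)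
        refine h5.congr_deriv ?_
        ring
      exact hg.comp_hasFDerivAt x (li i).hasFDerivAt
    exact HasFDerivAt.fun_sum (fun i _ => hterm i)
  -- second derivative
  set H : (Fin n → ℝ) → ((Fin n → ℝ) →L[ℝ] ((Fin n → ℝ) →L[ℝ] ℝ)) :=
    fun x => ∑ i, (ContinuousLinearMap.smulRight
      (((1 + w i) * db2Rel δ (dx i - li i x)) • li i) (li i)) with hHdef
  have hH : ∀ x, HasFDerivAt F (H x) x := by
    intro x
    have hterm : ∀ i : Fin qx, HasFDerivAt
        (fun y => (-((1 + w i) * dbRel δ (dx i - li i y))) • li i)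
        (ContinuousLinearMap.smulRight
          (((1 + w i) * db2Rel δ (dx i - li i x)) • li i) (li i)) x := by
      intro i
      have h3 : HasDerivAt (fun t : ℝ => dx i - t) (-1) (li i x) := by
        simpa using ((hasDerivAt_const (li i x) (dx i)).fun_sub (hasDerivAt_id (li i x)))
      have hg : HasDerivAt (fun t : ℝ => -((1 + w i) * dbRel δ (dx i - t)))
          ((1 + w i) * db2Rel δ (dx i - li i x)) (li i x) := by
        have h4 := (((hasDerivAt_dbRel hδ (dx i - li i x)).comp (li i x) h3).const_mul
          (1 + w i)).neg
        refine h4.congr_deriv ?_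
        ring
      have hc : HasFDerivAt (fun y => -((1 + w i) * dbRel δ (dx i - li i y)))
          (((1 + w i) * db2Rel δ (dx i - li i x)) • li i) x := by
        have := hg.comp_hasFDerivAt x (li i).hasFDerivAt
        exact this
      have h6 := hc.fun_smul (hasFDerivAt_const (li i) x)
      refine h6.congr_fderiv ?_
      simp
    exact HasFDerivAt.fun_sum (fun i _ => hterm i)
  have hfdBx : fderiv ℝ Bx = F := funext fun x => (hF x).fderiv
  -- quadratic form identity
  have hquad : ∀ v : Fin n → ℝ,
      v ⬝ᵥ ((Cxᵀ * D * Cx) *ᵥ v) = ∑ i, (1 + w i) * ((Cx *ᵥ v) i)^2 := by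
    intro v
    rw [← Matrix.mulVec_mulVec, ← Matrix.mulVec_mulVec, Matrix.dotProduct_mulVec,
      Matrix.vecMul_transpose]
    simp only [dotProduct, Matrix.mulVec_diagonal, D]
    apply Finset.sum_congr rfl
    intro i _
    ring
  constructor
  · intro x v
    have h2d : fderiv ℝ (fderiv ℝ Bx) x = H x := by
      rw [hfdBx]
      exact (hH x).fderiv
    rw [h2d]
    have happ : (H x) v v = ∑ i, (1 + w i) * db2Rel δ (dx i - li i x) * (li i v) * (li i v) := by
      simp [hHdef, ContinuousLinearMap.sum_apply, smul_eq_mul]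
    rw [happ, hquad, Finset.mul_sum]
    apply Finset.sum_le_sum
    intro i _
    have h1 : 0 ≤ 1 + w i := by linarith [hw i]
    have h2 := db2Rel_le hδ (dx i - li i x)
    have h3 := db2Rel_nonneg hδ (dx i - li i x)
    have h4 : li i v = (Cx *ᵥ v) i := hli i v
    rw [h4]
    have h5 : (0:ℝ) ≤ ((Cx *ᵥ v) i)^2 := sq_nonneg _
    calc (1 + w i) * db2Rel δ (dx i - li i x) * (Cx *ᵥ v) i * (Cx *ᵥ v) i
        = ((1 + w i) * ((Cx *ᵥ v) i)^2) * db2Rel δ (dx i - li i x) := by ring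
      _ ≤ ((1 + w i) * ((Cx *ᵥ v) i)^2) * (δ^2)⁻¹ := by
          apply mul_le_mul_of_nonneg_left h2 (by positivity)
      _ = 1 / δ ^ 2 * ((1 + w i) * ((Cx *ᵥ v) i)^2) := by
          rw [one_div]; ring
  · intro x
    -- the gradient at zero vanishes
    have hF0 : F 0 = 0 := by rw [← hfdBx]; exact hgrad
    have hlin0 : (∑ i, (1 + w i) * (dx i)⁻¹ * (Cx *ᵥ x) i) = 0 := by
      have := congrFun (congrArg (fun (f : (Fin n → ℝ) →L[ℝ] ℝ) => (f : (Fin n → ℝ) → ℝ)) hF0) x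
      simp only [hFdef, ContinuousLinearMap.sum_apply, ContinuousLinearMap.smul_apply,
        smul_eq_mul, ContinuousLinearMap.zero_apply] at this
      rw [← this]
      apply Finset.sum_congr rfl
      intro i _
      have hz : li i 0 = 0 := by rw [hli]; simp
      rw [hz, sub_zero, dbRel_of_ge hδ (hδd i), hli]
      ring
    have hineq : Bx x ≤ ∑ i, (1 + w i) * ((Cx *ᵥ x) i / dx i + ((Cx *ᵥ x) i)^2/(2*δ^2)) := by
      apply Finset.sum_le_sum
      intro i _
      have h1 : 0 ≤ 1 + w i := by linarith [hw i]
      exact mul_le_mul_of_nonneg_left (oneD hδ (hδd i) ((Cx *ᵥ x) i)) h1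
    have hsplit : ∑ i, (1 + w i) * ((Cx *ᵥ x) i / dx i + ((Cx *ᵥ x) i)^2/(2*δ^2))
        = (∑ i, (1 + w i) * (dx i)⁻¹ * (Cx *ᵥ x) i)
          + (1/(2*δ^2)) * ∑ i, (1 + w i) * ((Cx *ᵥ x) i)^2 := by
      rw [Finset.mul_sum, ← Finset.sum_add_distrib]
      apply Finset.sum_congr rfl
      intro i _
      field_simp
    have hrhs : x ⬝ᵥ ((((1 : ℝ) / (2 * δ ^ 2)) • (Cxᵀ * D * Cx)) *ᵥ x)
        = (1/(2*δ^2)) * ∑ i, (1 + w i) * ((Cx *ᵥ x) i)^2 := by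
      rw [Matrix.smul_mulVec, dotProduct_smul, hquad]
      simp [smul_eq_mul]
    rw [hrhs]
    calc Bx x ≤ _ := hineq
      _ = _ := hsplit
      _ = (1/(2*δ^2)) * ∑ i, (1 + w i) * ((Cx *ᵥ x) i)^2 := by rw [hlin0]; ring
end
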